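/- The Neyman loss is asymmetric toward 1/2: if σ₀, σ₁ > 0 with π* = σ₁/(σ₀+σ₁) < 1/2, then for any ε with 0 < ε ≤ 1/2 − π* and ε < π*, we have f(π* + ε) < f(π* − ε), where f(π) = σ₁²/π + σ₀²/(1-π). -/

import Mathlib

theorem neyman_loss_asymmetric
    (σ0 σ1 ε : ℝ) (h0 : 0 < σ0) (h1 : 0 < σ1)
    (hπ : σ1 / (σ0 + σ1) < 1/2)
    (hε : 0 < ε)
    (hεlow : ε < σ1 / (σ0 + σ1))
    (hεhigh : ε ≤ 1/2 - σ1 / (σ0 + σ1)) :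
    σ1^2 / (σ1 / (σ0 + σ1) + ε) + σ0^2 / (1 - (σ1 / (σ0 + σ1) + ε))
      < σ1^2 / (σ1 / (σ0 + σ1) - ε) + σ0^2 / (1 - (σ1 / (σ0 + σ1) - ε)) := by
  have hs : 0 < σ0 + σ1 := by linarith
  set p := σ1 / (σ0 + σ1) with hp
  have hps : p * (σ0 + σ1) = σ1 := div_mul_cancel₀ _ hs.ne'
  have hσ : σ1 < σ0 := by
    nlinarith [hπ, hps]
  have hppos : 0 < p := div_pos h1 hs
  have hb : 0 < p - ε := by linarith
  have ha : 0 < p + ε := by linarith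
  have h1a : 0 < 1 - (p + ε) := by linarith
  have h1b : 0 < 1 - (p - ε) := by linarith
  have h1p : 1 - p = σ0 / (σ0 + σ1) := by
    rw [hp]; field_simp; ring
  rw [div_add_div _ _ ha.ne' h1a.ne', div_add_div _ _ hb.ne' h1b.ne',
    div_lt_div_iff₀ (by positivity) (by positivity)]
  have key : σ1^2 * ((1-p)^2 - ε^2) > σ0^2 * (p^2 - ε^2) := by
    have e1 : (1-p)^2 = σ0^2 / (σ0+σ1)^2 := by rw [h1p, div_pow]
    have e2 : p^2 = σ1^2 / (σ0+σ1)^2 := by rw [hp, div_pow]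
    rw [e1, e2]
    have heq : σ1^2 * (σ0^2 / (σ0+σ1)^2) = σ0^2 * (σ1^2/(σ0+σ1)^2) := by ring
    have h2 : 0 < σ0^2 - σ1^2 := by nlinarith
    have hsq : σ1^2*ε^2 < σ0^2*ε^2 := by nlinarith [mul_pos h2 (mul_pos hε hε)]
    nlinarith [heq, hsq]
  nlinarith [key, mul_pos ha h1a, mul_pos hb h1b, sq_nonneg ε]
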